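/- Suppose G is 2-torsion free. Then every k-commuting derivation of G is zero: if D: G → G is an R-linear derivation satisfying [D(g), g]_k = 0 for all g ∈ G, then D = 0. -/

import Mathlib

/-- The iterated commutator: `iterComm 0 x y = x`, `iterComm (i+1) x y = [iterComm i x y, y]`. -/
def iterComm {G : Type*} [Ring G] : ℕ → G → G → G
  | 0, x, _ => x
  | i + 1, x, y => iterComm i x y * y - y * iterComm i x y

lemma iterComm_succ {G : Type*} [Ring G] (n : ℕ) (x y : G) :
    iterComm (n+1) x y = iterComm n x y * y - y * iterComm n x y := rfl

lemma iterComm_one {G : Type*} [Ring G] (x y : G) :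
    iterComm 1 x y = x * y - y * x := rfl

lemma iterComm_two {G : Type*} [Ring G] (x y : G) :
    iterComm 2 x y = (x * y - y * x) * y - y * (x * y - y * x) := rfl

lemma iterComm_step {G : Type*} [Ring G] {p : G} (hp : p * p = p) (x : G) (n : ℕ) :
    iterComm (n+3) x p = iterComm (n+1) x p := by
  have h1 : ∀ a : G, p * (p * a) = p * a := fun a => by rw [← mul_assoc, hp]
  rw [show n+3 = (n+2)+1 from rfl, iterComm_succ, show n+2 = (n+1)+1 from rfl,
      iterComm_succ, iterComm_succ]
  simp only [sub_mul, mul_sub, mul_assoc, hp, h1]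
  abel

lemma iterComm_reduce {G : Type*} [Ring G] {p : G} (hp : p * p = p) {k : ℕ} (hk : 2 ≤ k)
    (x : G) (h : iterComm k x p = 0) :
    iterComm 1 x p = 0 ∨ iterComm 2 x p = 0 := by
  have key : ∀ j : ℕ, iterComm (2*j+2) x p = iterComm 2 x p ∧
      iterComm (2*j+3) x p = iterComm 3 x p := by
    intro j
    induction j with
    | zero => exact ⟨rfl, rfl⟩
    | succ i ih =>
      constructor
      · rw [show 2*(i+1)+2 = (2*i+1)+3 by omega, iterComm_step hp,
            show (2*i+1)+1 = 2*i+2 by omega]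
        exact ih.1
      · rw [show 2*(i+1)+3 = (2*i+2)+3 by omega, iterComm_step hp,
            show (2*i+2)+1 = 2*i+3 by omega]
        exact ih.2
  have h31 : iterComm 3 x p = iterComm 1 x p := by
    simpa using iterComm_step hp x 0
  rcases Nat.even_or_odd k with ⟨j, hj⟩ | ⟨j, hj⟩
  · right
    rw [show k = 2*(j-1)+2 by omega] at h
    rw [← (key (j-1)).1]
    exact h
  · left
    rw [show k = 2*(j-1)+3 by omega] at h
    rw [(key (j-1)).2, h31] at h
    exact h

/-- if the generalized matrix algebra `G` is 2-torsion free, then every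
k-commuting derivation of `G` is zero. -/
theorem kCommuting_derivation_eq_zero
    {R : Type*} [CommRing R] {G : Type*} [Ring G] [Algebra R G]
    (e : G) (he : e * e = e) (f : G) (hf : f = 1 - e)
    (hMN : (∃ m : G, m = e * m * f ∧ m ≠ 0) ∨ (∃ n : G, n = f * n * e ∧ n ≠ 0))
    (hMfaithL : ∀ a : G, a = e * a * e → (∀ m : G, m = e * m * f → a * m = 0) → a = 0)
    (hMfaithR : ∀ b : G, b = f * b * f → (∀ m : G, m = e * m * f → m * b = 0) → b = 0)
    (htf : ∀ g : G, g + g = 0 → g = 0)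
    (k : ℕ) (hk : 2 ≤ k)
    (D : G →ₗ[R] G) (hder : ∀ x y : G, D (x * y) = D x * y + x * D y)
    (hD : ∀ g : G, iterComm k (D g) g = 0) :
    D = 0 := by
  -- basic Peirce facts
  have hef : e * f = 0 := by rw [hf, mul_sub, mul_one, he, sub_self]
  have hfe : f * e = 0 := by rw [hf, sub_mul, one_mul, he, sub_self]
  have hff : f * f = f := by
    rw [hf, sub_mul, one_mul, mul_sub, mul_one, he]
    abel
  have hE : ∀ z : G, e * (e * z) = e * z := fun z => by rw [← mul_assoc, he]
  have hF : ∀ z : G, f * (f * z) = f * z := fun z => by rw [← mul_assoc, hff]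
  have hEF : ∀ z : G, e * (f * z) = 0 := fun z => by rw [← mul_assoc, hef, zero_mul]
  have hFE : ∀ z : G, f * (e * z) = 0 := fun z => by rw [← mul_assoc, hfe, zero_mul]
  have hsplit : ∀ z : G, z = e*z*e + e*z*f + f*z*e + f*z*f := by
    intro z
    have h1 : e + f = 1 := by rw [hf]; abel
    calc z = (e+f) * z * (e+f) := by rw [h1, one_mul, mul_one]
    _ = e*z*e + e*z*f + f*z*e + f*z*f := by noncomm_ring
  -- D 1 = 0
  have hD1 : D 1 = 0 := by
    have h := hder 1 1
    rw [mul_one, mul_one, one_mul] at h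
    exact left_eq_add.mp h
  -- D e = 0
  have hx : D e = D e * e + e * D e := by
    have h := hder e e
    rwa [he] at h
  have hDee : e * D e * e = 0 := by
    have h2 : e * D e * e = e * D e * e + e * D e * e := by
      conv_lhs => rw [hx]
      simp only [mul_add, add_mul, mul_assoc, he, hE]
    exact left_eq_add.mp h2
  have hDff : f * D e * f = 0 := by
    conv_lhs => rw [hx]
    simp only [mul_add, add_mul, mul_assoc, hef, hFE, mul_zero, zero_mul, add_zero, zero_add]
  have hoff : e * D e * f = 0 ∧ f * D e * e = 0 := by
    rcases iterComm_reduce he hk (D e) (hD e) with h | h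
    · rw [iterComm_one] at h
      constructor
      · have h2 : e * (D e * e - e * D e) * f = 0 := by rw [h, mul_zero, zero_mul]
        simpa [mul_sub, sub_mul, mul_assoc, hef, hE, mul_zero] using h2
      · have h2 : f * (D e * e - e * D e) * e = 0 := by rw [h, mul_zero, zero_mul]
        simpa [mul_sub, sub_mul, mul_assoc, he, hFE] using h2
    · rw [iterComm_two] at h
      constructor
      · have h2 : e * ((D e * e - e * D e) * e - e * (D e * e - e * D e)) * f = 0 := by
          rw [h, mul_zero, zero_mul]
        simpa [mul_sub, sub_mul, mul_assoc, he, hef, hE, mul_zero] using h2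
      · have h2 : f * ((D e * e - e * D e) * e - e * (D e * e - e * D e)) * e = 0 := by
          rw [h, mul_zero, zero_mul]
        simpa [mul_sub, sub_mul, mul_assoc, he, hFE, mul_zero] using h2
  have hDe : D e = 0 := by
    rw [hsplit (D e), hDee, hoff.1, hoff.2, hDff]
    simp
  have hDf : D f = 0 := by rw [hf, map_sub, hD1, hDe, sub_zero]
  -- M helpers
  have heu : ∀ u : G, u = e*u*f → e*u = u := fun u hu => by
    rw [hu, ← mul_assoc, ← mul_assoc, he]
  have hue : ∀ u : G, u = e*u*f → u*e = 0 := fun u hu => by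
    rw [hu, mul_assoc, hfe, mul_zero]
  have huf : ∀ u : G, u = e*u*f → u*f = u := fun u hu => by
    rw [hu, mul_assoc, hff]
  have hMM : ∀ u v : G, u = e*u*f → v = e*v*f → u*v = 0 := fun u v hu hv => by
    rw [hv, ← mul_assoc, ← mul_assoc, hue u hu, zero_mul, zero_mul]
  have hDM : ∀ m : G, m = e*m*f → D m = e * D m * f := by
    intro m hm
    have h0 : m = e*(m*f) := by rw [← mul_assoc, ← hm]
    calc D m = D (e*(m*f)) := by rw [← h0]
    _ = D e * (m*f) + e * D (m*f) := hder e (m*f)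
    _ = 0 * (m*f) + e * D (m*f) := by rw [hDe]
    _ = e * (D m * f + m * D f) := by rw [zero_mul, zero_add, hder m f]
    _ = e * (D m * f + m * 0) := by rw [hDf]
    _ = e * D m * f := by rw [mul_zero, add_zero, ← mul_assoc]
  -- D vanishes on M
  have hMzero : ∀ m : G, m = e*m*f → D m = 0 := by
    intro m hm
    have hd : D m = e * D m * f := hDM m hm
    have hpp : (e+m)*(e+m) = e+m := by
      rw [mul_add, add_mul, add_mul, he, hue m hm, heu m hm, hMM m m hm hm,
          add_zero, add_zero]
    have hDp : D (e+m) = D m := by rw [map_add, hDe, zero_add]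
    have hdp : D m * (e+m) = 0 := by rw [mul_add, hue _ hd, hMM _ _ hd hm, add_zero]
    have hpd : (e+m) * D m = D m := by rw [add_mul, heu _ hd, hMM m _ hm hd, add_zero]
    rcases iterComm_reduce hpp hk (D (e+m)) (hD (e+m)) with h | h
    · rw [iterComm_one, hDp, hdp, hpd] at h
      simpa using h
    · rw [iterComm_two, hDp, hdp, hpd] at h
      simpa [neg_mul, mul_neg, hdp, hpd] using h
  -- N helpers
  have hfu' : ∀ u : G, u = f*u*e → f*u = u := fun u hu => by
    rw [hu, ← mul_assoc, ← mul_assoc, hff]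
  have huf' : ∀ u : G, u = f*u*e → u*f = 0 := fun u hu => by
    rw [hu, mul_assoc, hef, mul_zero]
  have hue' : ∀ u : G, u = f*u*e → u*e = u := fun u hu => by
    rw [hu, mul_assoc, he]
  have hNN : ∀ u v : G, u = f*u*e → v = f*v*e → u*v = 0 := fun u v hu hv => by
    rw [hv, ← mul_assoc, ← mul_assoc, huf' u hu, zero_mul, zero_mul]
  have hDN : ∀ n : G, n = f*n*e → D n = f * D n * e := by
    intro n hn
    have h0 : n = f*(n*e) := by rw [← mul_assoc, ← hn]
    calc D n = D (f*(n*e)) := by rw [← h0]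
    _ = D f * (n*e) + f * D (n*e) := hder f (n*e)
    _ = 0 * (n*e) + f * D (n*e) := by rw [hDf]
    _ = f * (D n * e + n * D e) := by rw [zero_mul, zero_add, hder n e]
    _ = f * (D n * e + n * 0) := by rw [hDe]
    _ = f * D n * e := by rw [mul_zero, add_zero, ← mul_assoc]
  -- D vanishes on N
  have hNzero : ∀ n : G, n = f*n*e → D n = 0 := by
    intro n hn
    have hd : D n = f * D n * e := hDN n hn
    have hpp : (f+n)*(f+n) = f+n := by
      rw [mul_add, add_mul, add_mul, hff, huf' n hn, hfu' n hn, hNN n n hn hn,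
          add_zero, add_zero]
    have hDp : D (f+n) = D n := by rw [map_add, hDf, zero_add]
    have hdp : D n * (f+n) = 0 := by rw [mul_add, huf' _ hd, hNN _ _ hd hn, add_zero]
    have hpd : (f+n) * D n = D n := by rw [add_mul, hfu' _ hd, hNN n _ hn hd, add_zero]
    rcases iterComm_reduce hpp hk (D (f+n)) (hD (f+n)) with h | h
    · rw [iterComm_one, hDp, hdp, hpd] at h
      simpa using h
    · rw [iterComm_two, hDp, hdp, hpd] at h
      simpa [neg_mul, mul_neg, hdp, hpd] using h
  -- D vanishes on A
  have hAzero : ∀ a : G, a = e*a*e → D a = 0 := by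
    intro a ha
    have hea : e * a = a := by rw [ha, ← mul_assoc, ← mul_assoc, he]
    have hDa : D a = e * D a * e := by
      have h0 : a = e*(a*e) := by rw [← mul_assoc, ← ha]
      calc D a = D (e*(a*e)) := by rw [← h0]
      _ = D e * (a*e) + e * D (a*e) := hder e (a*e)
      _ = 0 * (a*e) + e * D (a*e) := by rw [hDe]
      _ = e * (D a * e + a * D e) := by rw [zero_mul, zero_add, hder a e]
      _ = e * (D a * e + a * 0) := by rw [hDe]
      _ = e * D a * e := by rw [mul_zero, add_zero, ← mul_assoc]
    refine hMfaithL (D a) hDa (fun m hm => ?_)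
    have h1 : a*m = e*(a*m)*f := by rw [← mul_assoc, hea, mul_assoc, huf m hm]
    have h2 := hMzero (a*m) h1
    have h3 := hder a m
    rw [hMzero m hm, mul_zero, add_zero] at h3
    rw [← h3]
    exact h2
  -- D vanishes on B
  have hBzero : ∀ b : G, b = f*b*f → D b = 0 := by
    intro b hb
    have hbf : b * f = b := by rw [hb, mul_assoc, hff]
    have hDb : D b = f * D b * f := by
      have h0 : b = f*(b*f) := by rw [← mul_assoc, ← hb]
      calc D b = D (f*(b*f)) := by rw [← h0]
      _ = D f * (b*f) + f * D (b*f) := hder f (b*f)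
      _ = 0 * (b*f) + f * D (b*f) := by rw [hDf]
      _ = f * (D b * f + b * D f) := by rw [zero_mul, zero_add, hder b f]
      _ = f * (D b * f + b * 0) := by rw [hDf]
      _ = f * D b * f := by rw [mul_zero, add_zero, ← mul_assoc]
    refine hMfaithR (D b) hDb (fun m hm => ?_)
    have hmb : m * b = e*(m*b)*f := by rw [← mul_assoc, heu m hm, mul_assoc, hbf]
    have h2 := hMzero (m*b) hmb
    have h3 := hder m b
    rw [hMzero m hm, zero_mul, zero_add] at h3
    rw [← h3]
    exact h2
  -- conclusion
  ext g
  simp only [LinearMap.zero_apply]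
  rw [hsplit g, map_add, map_add, map_add,
      hAzero (e*g*e) (by simp [mul_assoc, he, hE]),
      hMzero (e*g*f) (by simp [mul_assoc, hE, hff]),
      hNzero (f*g*e) (by simp [mul_assoc, hF, he]),
      hBzero (f*g*f) (by simp [mul_assoc, hF, hff])]
  simp
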